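/- Let g_c(λ) := ∑_{k=1}^{M} a_k cos(kλ) where 0 < c ≤ 1, M is a positive integer, and a_k := (c²/π)/k for k ∈ {1,2}, a_k := (c²/π)/(k log k) for k ≥ 3. Then for every λ with c ≤ |λ| ≤ π one has |g_c(λ)| ≤ c, and for every λ with |λ| ≤ c one has −c ≤ g_c(λ) ≤ ∑_{k=1}^{M} a_k. -/

import Mathlib

open Real

lemma sum_cos_tele (x : ℝ) (N : ℕ) : ∀ n, N ≤ n →
    2 * Real.sin (x/2) * ∑ k ∈ Finset.Icc (N+1) n, Real.cos (k*x)
      = Real.sin ((n + 1/2) * x) - Real.sin ((N + 1/2) * x) := by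
  intro n hn
  induction n, hn using Nat.le_induction with
  | base => simp
  | succ n hn ih =>
    rw [Finset.sum_Icc_succ_top (by omega), mul_add, ih]
    have : Real.sin ((↑(n+1) + 1/2) * x) - Real.sin ((n + 1/2) * x)
        = 2 * Real.sin (x/2) * Real.cos ((↑(n+1)) * x) := by
      rw [Real.sin_sub_sin]
      push_cast
      ring_nf
    push_cast at this ⊢
    linarith

lemma abs_sum_cos_le {x : ℝ} (hx0 : 0 < x) (hxpi : x ≤ π) (N n : ℕ) :
    |∑ k ∈ Finset.Icc (N+1) n, Real.cos (k*x)| ≤ π / x := by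
  have hpi := Real.pi_pos
  rcases le_or_gt n N with h | h
  · rw [Finset.Icc_eq_empty (by omega)]
    simp [le_div_iff₀ hx0]
    positivity
  · have hs : x / π ≤ Real.sin (x/2) := by
      have := Real.mul_le_sin (x := x/2) (by linarith) (by linarith)
      calc x / π = 2/π * (x/2) := by ring
        _ ≤ _ := this
    have hs0 : 0 < Real.sin (x/2) := lt_of_lt_of_le (by positivity) hs
    have h2 : |2 * Real.sin (x/2) * ∑ k ∈ Finset.Icc (N+1) n, Real.cos (k*x)| ≤ 2 := by
      rw [sum_cos_tele x N n h.le]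
      have a1 := Real.neg_one_le_sin ((↑n + 1/2) * x)
      have a2 := Real.sin_le_one ((↑n + 1/2) * x)
      have b1 := Real.neg_one_le_sin ((↑N + 1/2) * x)
      have b2 := Real.sin_le_one ((↑N + 1/2) * x)
      rw [abs_le]; constructor <;> linarith
    rw [abs_mul, abs_of_pos (by positivity)] at h2
    have hT : |∑ k ∈ Finset.Icc (N+1) n, Real.cos (k*x)| ≤ 1 / Real.sin (x/2) := by
      rw [le_div_iff₀ hs0]
      nlinarith [abs_nonneg (∑ k ∈ Finset.Icc (N+1) n, Real.cos (k*x))]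
    refine hT.trans ?_
    rw [div_le_div_iff₀ hs0 hx0]
    calc 1 * x = (x/π) * π := by field_simp
      _ ≤ Real.sin (x/2) * π := by nlinarith
      _ = π * Real.sin (x/2) := by ring

lemma abel_bound (a f : ℕ → ℝ) (N : ℕ) (B : ℝ) (hB : 0 ≤ B)
    (ha0 : ∀ k, N + 1 ≤ k → 0 ≤ a k)
    (ha : ∀ k, N + 1 ≤ k → a (k+1) ≤ a k)
    (hT : ∀ n, |∑ k ∈ Finset.Icc (N+1) n, f k| ≤ B) (M : ℕ) :
    |∑ k ∈ Finset.Icc (N+1) M, a k * f k| ≤ a (N+1) * B := by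
  have hanti : ∀ m n, N + 1 ≤ m → m ≤ n → a n ≤ a m := by
    intro m n hm hmn
    induction n, hmn using Nat.le_induction with
    | base => exact le_rfl
    | succ n hn ih => exact (ha n (by omega)).trans ih
  rcases le_or_gt M N with h | h
  · rw [Finset.Icc_eq_empty (by omega)]
    simp
    exact mul_nonneg (ha0 _ le_rfl) hB
  · -- key : |S M - a M * T M| ≤ (a (N+1) - a M) * B for M ≥ N+1
    have key : ∀ m, N + 1 ≤ m →
        |(∑ k ∈ Finset.Icc (N+1) m, a k * f k) - a m * ∑ k ∈ Finset.Icc (N+1) m, f k|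
          ≤ (a (N+1) - a m) * B := by
      intro m hm
      induction m, hm using Nat.le_induction with
      | base => simp
      | succ n hn ih =>
        rw [Finset.sum_Icc_succ_top (by omega), Finset.sum_Icc_succ_top (by omega)]
        have e1 : (∑ k ∈ Finset.Icc (N+1) n, a k * f k) + a (n+1) * f (n+1)
            - a (n+1) * ((∑ k ∈ Finset.Icc (N+1) n, f k) + f (n+1))
            = ((∑ k ∈ Finset.Icc (N+1) n, a k * f k) - a n * ∑ k ∈ Finset.Icc (N+1) n, f k)
              + (a n - a (n+1)) * ∑ k ∈ Finset.Icc (N+1) n, f k := by ring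
        rw [e1]
        refine (abs_add_le _ _).trans ?_
        have h2 : |(a n - a (n+1)) * ∑ k ∈ Finset.Icc (N+1) n, f k| ≤ (a n - a (n+1)) * B := by
          rw [abs_mul, abs_of_nonneg (by linarith [ha n hn])]
          exact mul_le_mul_of_nonneg_left (hT n) (by linarith [ha n hn])
        linarith [ih]
    have hM1 : N + 1 ≤ M := h
    have h1 := key M hM1
    have h2 : |a M * ∑ k ∈ Finset.Icc (N+1) M, f k| ≤ a M * B := by
      rw [abs_mul, abs_of_nonneg (ha0 M hM1)]
      exact mul_le_mul_of_nonneg_left (hT M) (ha0 M hM1)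
    calc |∑ k ∈ Finset.Icc (N+1) M, a k * f k|
        = |((∑ k ∈ Finset.Icc (N+1) M, a k * f k) - a M * ∑ k ∈ Finset.Icc (N+1) M, f k)
            + a M * ∑ k ∈ Finset.Icc (N+1) M, f k| := by rw [sub_add_cancel]
      _ ≤ _ := abs_add_le _ _
      _ ≤ (a (N+1) - a M) * B + a M * B := by linarith
      _ = a (N+1) * B := by ring

/-- The coefficients `a_k` of Step 3.5 of the paper (with `a_0 := 0`, unused). -/
noncomputable def coeffA (c : ℝ) (k : ℕ) : ℝ :=
  if k = 0 then 0
  else if k ≤ 2 then c^2 / (π * k)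
  else c^2 / (π * k * Real.log k)

/-- The trigonometric polynomial `g_c(λ) = ∑_{k=1}^M a_k cos(kλ)`. -/
noncomputable def gc (c : ℝ) (M : ℕ) (x : ℝ) : ℝ :=
  ∑ k ∈ Finset.Icc 1 M, coeffA c k * Real.cos (k * x)

lemma one_le_log {k : ℕ} (hk : 3 ≤ k) : 1 ≤ Real.log k := by
  rw [Real.le_log_iff_exp_le (by positivity)]
  calc Real.exp 1 ≤ 3 := by linarith [Real.exp_one_lt_d9]
    _ ≤ (k : ℝ) := by exact_mod_cast hk

lemma coeffA_nonneg (c : ℝ) (k : ℕ) : 0 ≤ coeffA c k := by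
  unfold coeffA
  have hpi := Real.pi_pos
  split_ifs with h1 h2
  · exact le_rfl
  · have hk0 : (0:ℝ) < k := by positivity
    positivity
  · have hk : 3 ≤ k := by omega
    have := one_le_log hk
    have hk0 : (0:ℝ) < k := by positivity
    positivity

lemma coeffA_succ_le (c : ℝ) (k : ℕ) (hk : 1 ≤ k) : coeffA c (k+1) ≤ coeffA c k := by
  have hpi := Real.pi_pos
  rcases Nat.lt_or_ge k 3 with h | h
  · interval_cases k
    · simp [coeffA]
      rw [div_le_div_iff₀ (by positivity) (by positivity)]
      nlinarith [sq_nonneg c]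
    · have hl := one_le_log (le_refl 3)
      have hl' : (1:ℝ) ≤ Real.log 3 := by exact_mod_cast hl
      have hL : (0:ℝ) < Real.log 3 := by linarith
      simp only [coeffA, show ¬((2:ℕ)+1 = 0) by omega, show ¬((2:ℕ)+1 ≤ 2) by omega,
        show ¬((2:ℕ) = 0) by omega, show (2:ℕ) ≤ 2 from le_rfl, if_true, if_false,
        ite_true, ite_false]
      rw [div_le_div_iff₀ (by push_cast; positivity) (by positivity)]
      push_cast
      nlinarith [mul_nonneg (mul_nonneg (sq_nonneg c) hpi.le)
        (show (0:ℝ) ≤ 3 * Real.log 3 - 2 by linarith)]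
  · have h1 : coeffA c (k+1) = c^2 / (π * (k+1) * Real.log (k+1)) := by
      unfold coeffA; rw [if_neg (by omega), if_neg (by omega)]; push_cast; ring_nf
    have h2 : coeffA c k = c^2 / (π * k * Real.log k) := by
      unfold coeffA; rw [if_neg (by omega), if_neg (by omega)]
    rw [h1, h2]
    have hlk : 1 ≤ Real.log k := one_le_log h
    have hll : Real.log k ≤ Real.log (k+1) := by
      apply Real.log_le_log (by positivity)
      push_cast; linarith
    have hk0 : (0:ℝ) < k := by positivity
    have hd1 : (0:ℝ) < π * k * Real.log k := by
      exact mul_pos (mul_pos hpi hk0) (by linarith)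
    have hd2 : π * k * Real.log k ≤ π * (k+1) * Real.log (k+1) := by
      exact mul_le_mul (by nlinarith) hll (by linarith) (by positivity)
    exact div_le_div_of_nonneg_left (by positivity) hd1 hd2

lemma coeffA_le (c : ℝ) (k : ℕ) (hk : 1 ≤ k) : coeffA c k ≤ c^2 / (π * k) := by
  have hpi := Real.pi_pos
  have hk0 : (0:ℝ) < k := by positivity
  unfold coeffA
  rw [if_neg (by omega)]
  split_ifs with h2
  · exact le_rfl
  · have hlk : 1 ≤ Real.log k := one_le_log (by omega)
    calc c^2 / (π * k * Real.log k) ≤ c^2 / (π * k * 1) := by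
          exact div_le_div_of_nonneg_left (by positivity) (by positivity) (by nlinarith [mul_pos hpi hk0])
      _ = c^2 / (π * k) := by ring_nf

lemma gc_even (c : ℝ) (M : ℕ) (x : ℝ) : gc c M x = gc c M |x| := by
  rcases abs_cases x with ⟨h, _⟩ | ⟨h, _⟩ <;> rw [h]
  unfold gc
  apply Finset.sum_congr rfl
  intro k _
  rw [mul_neg, Real.cos_neg]

theorem stmt14 (c : ℝ) (hc0 : 0 < c) (hc1 : c ≤ 1) (M : ℕ) (hM : 1 ≤ M) :
    (∀ x : ℝ, c ≤ |x| → |x| ≤ π → |gc c M x| ≤ c) ∧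
      (∀ x : ℝ, |x| ≤ c → -c ≤ gc c M x ∧ gc c M x ≤ ∑ k ∈ Finset.Icc 1 M, coeffA c k) := by
  have hpi := Real.pi_pos
  have hpi3 := Real.pi_gt_three
  constructor
  · intro x hcx hxpi
    rw [gc_even]
    set y := |x| with hy
    have hy0 : 0 < y := lt_of_lt_of_le hc0 hcx
    have habel := abel_bound (coeffA c) (fun k => Real.cos (k*y)) 0 (π/y) (by positivity)
      (fun k hk => coeffA_nonneg c k) (fun k hk => coeffA_succ_le c k hk)
      (fun n => abs_sum_cos_le hy0 hxpi 0 n) M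
    have h1 : coeffA c 1 = c^2 / π := by simp [coeffA]
    rw [h1] at habel
    have hgc : gc c M y = ∑ k ∈ Finset.Icc (0+1) M, coeffA c k * Real.cos (k*y) := rfl
    rw [hgc]
    refine habel.trans ?_
    rw [div_mul_div_comm, div_le_iff₀ (by positivity)]
    calc c^2 * π = π * (c * c) := by ring
      _ ≤ π * (c * y) := by gcongr
      _ = c * (π * y) := by ring
  · intro x hxc
    rw [gc_even]
    set y := |x| with hy
    have hy0 : 0 ≤ y := abs_nonneg x
    have hyc : y ≤ c := hxc
    constructor
    · rcases eq_or_lt_of_le hy0 with h0 | h0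
      · have : gc c M y = ∑ k ∈ Finset.Icc 1 M, coeffA c k := by
          unfold gc
          apply Finset.sum_congr rfl
          intro k _
          rw [← h0, mul_zero, Real.cos_zero, mul_one]
        rw [this]
        have : (0:ℝ) ≤ ∑ k ∈ Finset.Icc 1 M, coeffA c k :=
          Finset.sum_nonneg fun k _ => coeffA_nonneg c k
        linarith
      · have hy1 : y ≤ 1 := hyc.trans hc1
        have hypi : y ≤ π := by linarith
        set N := Nat.floor (1/y) with hNdef
        have hNle : (N : ℝ) ≤ 1/y := Nat.floor_le (by positivity)
        have hNlt : 1/y < (N : ℝ) + 1 := Nat.lt_floor_add_one (1/y)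
        have hkb : ∀ k : ℕ, k ≤ N → 0 ≤ coeffA c k * Real.cos (k * y) := by
          intro k hk
          apply mul_nonneg (coeffA_nonneg c k)
          apply Real.cos_nonneg_of_mem_Icc
          constructor
          · have : (0:ℝ) ≤ (k:ℝ) * y := by positivity
            linarith
          · have hk' : (k:ℝ) ≤ 1/y := le_trans (by exact_mod_cast hk) hNle
            have : (k:ℝ) * y ≤ 1 := by
              rw [← div_mul_cancel₀ (1:ℝ) (ne_of_gt h0)]
              exact mul_le_mul_of_nonneg_right hk' hy0
            linarith
        rcases le_or_gt N M with hNM | hMN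
        · have hsplit : Finset.Icc 1 M = Finset.Icc 1 N ∪ Finset.Icc (N+1) M := by
            ext k; simp only [Finset.mem_Icc, Finset.mem_union]; omega
          have hdisj : Disjoint (Finset.Icc 1 N) (Finset.Icc (N+1) M) := by
            rw [Finset.disjoint_left]
            intro k hk hk'
            simp only [Finset.mem_Icc] at hk hk'
            omega
          have hgcs : gc c M y = (∑ k ∈ Finset.Icc 1 N, coeffA c k * Real.cos (k*y))
              + ∑ k ∈ Finset.Icc (N+1) M, coeffA c k * Real.cos (k*y) := by
            unfold gc; rw [hsplit, Finset.sum_union hdisj]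
          have hhead : 0 ≤ ∑ k ∈ Finset.Icc 1 N, coeffA c k * Real.cos (k*y) :=
            Finset.sum_nonneg fun k hk => hkb k (Finset.mem_Icc.mp hk).2
          have htail := abel_bound (coeffA c) (fun k => Real.cos (k*y)) N (π/y) (by positivity)
            (fun k hk => coeffA_nonneg c k) (fun k hk => coeffA_succ_le c k (by omega))
            (fun n => abs_sum_cos_le h0 hypi N n) M
          have hN1 : (1:ℝ) ≤ (N:ℝ) + 1 := by have := Nat.cast_nonneg (α := ℝ) N; linarith
          have hcoeff : coeffA c (N+1) ≤ c^2 / (π * (N+1)) := by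
            have := coeffA_le c (N+1) (by omega)
            push_cast at this ⊢
            exact this
          have hb2 : coeffA c (N+1) * (π/y) ≤ c^2 := by
            have hNy : 1 < ((N:ℝ)+1) * y := by
              rw [div_lt_iff₀ h0] at hNlt
              linarith
            calc coeffA c (N+1) * (π/y) ≤ (c^2 / (π * (N+1))) * (π/y) := by
                  apply mul_le_mul_of_nonneg_right hcoeff (by positivity)
              _ = c^2 / (((N:ℝ)+1) * y) := by
                  field_simp
              _ ≤ c^2 / 1 := by
                  apply div_le_div_of_nonneg_left (sq_nonneg c) (by linarith) hNy.le
              _ = c^2 := div_one _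
          have habs : |∑ k ∈ Finset.Icc (N+1) M, coeffA c k * Real.cos (k*y)| ≤ c^2 :=
            htail.trans hb2
          rw [abs_le] at habs
          rw [hgcs]
          nlinarith [habs.1]
        · have : 0 ≤ gc c M y := by
            apply Finset.sum_nonneg
            intro k hk
            exact hkb k (by have := (Finset.mem_Icc.mp hk).2; omega)
          linarith
    · unfold gc
      apply Finset.sum_le_sum
      intro k _
      calc coeffA c k * Real.cos (k * y) ≤ coeffA c k * 1 :=
            mul_le_mul_of_nonneg_left (Real.cos_le_one _) (coeffA_nonneg c k)
        _ = coeffA c k := mul_one _
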